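/- arXiv:1509.08146 — 5 statements merged into one kernel-verified Lean document; each statement's English description precedes it below -/
import Mathlib

section
/- For a positive definite covariance matrix C ∈ ℝ^{m×m}, observation matrix O ∈ ℝ^{p×m}, and σ > 0, we have log det(C - C Oᵀ (O C Oᵀ + σ² I)⁻¹ O C) = 2m log σ - log det(Oᵀ O + σ² C⁻¹). -/
open Matrix

lemma posDef_smul' {n : Type*} [Fintype n] {M : Matrix n n ℝ} (hM : M.PosDef)
    {r : ℝ} (hr : 0 < r) : (r • M).PosDef := by
  refine ⟨by rw [Matrix.IsHermitian, conjTranspose_smul, star_trivial, hM.1.eq], fun x hx => ?_⟩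
  have h := mul_pos hr (hM.2 hx)
  simp only [Finsupp.mul_sum] at h
  refine lt_of_lt_of_eq h (Finsupp.sum_congr fun i _ => Finsupp.sum_congr fun j _ => ?_)
  simp only [Matrix.smul_apply, smul_eq_mul]
  ring

/-- Closed formula for the log-det estimation error of the Kalman filter:
`log det(C - C Oᵀ (O C Oᵀ + σ² I)⁻¹ O C) = 2 m log σ - log det(Oᵀ O + σ² C⁻¹)`. -/
theorem logdet_error_covariance
    {m p : ℕ} (C : Matrix (Fin m) (Fin m) ℝ) (O : Matrix (Fin p) (Fin m) ℝ)
    (σ : ℝ) (hC : C.PosDef) (hσ : 0 < σ) :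
    Real.log (C - C * Oᵀ * (O * C * Oᵀ + σ ^ 2 • (1 : Matrix (Fin p) (Fin p) ℝ))⁻¹ * O * C).det
      = 2 * m * Real.log σ - Real.log (Oᵀ * O + σ ^ 2 • C⁻¹).det := by
  have hσ2 : (0:ℝ) < σ ^ 2 := by positivity
  set A := O * C * Oᵀ + σ ^ 2 • (1 : Matrix (Fin p) (Fin p) ℝ) with hAdef
  set B := Oᵀ * O + σ ^ 2 • C⁻¹ with hBdef
  have hOCOT : (O * C * Oᵀ).PosSemidef := by
    have := hC.posSemidef.mul_mul_conjTranspose_same O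
    rwa [conjTranspose_eq_transpose_of_trivial] at this
  have hA : A.PosDef := Matrix.PosDef.posSemidef_add hOCOT (posDef_smul' Matrix.PosDef.one hσ2)
  have hAinv : Invertible A := hA.isUnit.invertible
  have hB : B.PosDef := by
    refine Matrix.PosDef.posSemidef_add ?_ (posDef_smul' hC.inv hσ2)
    have := posSemidef_conjTranspose_mul_self O
    rwa [conjTranspose_eq_transpose_of_trivial] at this
  have hC1 : C * C⁻¹ = 1 := mul_nonsing_inv C hC.det_pos.ne'.isUnit
  have h0 : A⁻¹ * (O * C * Oᵀ) = 1 - σ ^ 2 • A⁻¹ := by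
    have h : A⁻¹ * (O * C * Oᵀ) + σ ^ 2 • A⁻¹ = 1 := by
      have h' := inv_mul_of_invertible A
      calc A⁻¹ * (O * C * Oᵀ) + σ ^ 2 • A⁻¹
          = A⁻¹ * (O * C * Oᵀ + σ ^ 2 • 1) := by
            rw [mul_add, mul_smul_comm, mul_one]
        _ = 1 := by rw [← hAdef]; exact h'
    exact eq_sub_of_add_eq h
  have key : (C - C * Oᵀ * A⁻¹ * O * C) * B = σ ^ 2 • (1 : Matrix (Fin m) (Fin m) ℝ) := by
    have h3 : C * Oᵀ * A⁻¹ * O * C * (Oᵀ * O)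
        = C * Oᵀ * O - σ ^ 2 • (C * Oᵀ * (A⁻¹ * O)) := by
      calc C * Oᵀ * A⁻¹ * O * C * (Oᵀ * O)
          = C * Oᵀ * (A⁻¹ * (O * C * Oᵀ)) * O := by
            simp only [Matrix.mul_assoc]
        _ = C * Oᵀ * (1 - σ ^ 2 • A⁻¹) * O := by rw [h0]
        _ = C * Oᵀ * O - σ ^ 2 • (C * Oᵀ * (A⁻¹ * O)) := by
            simp only [Matrix.mul_sub, Matrix.sub_mul, Matrix.mul_one, mul_smul_comm,
              smul_mul_assoc, Matrix.mul_assoc, Matrix.smul_mul, Matrix.mul_smul]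
    have h4 : C * Oᵀ * A⁻¹ * O * C * (σ ^ 2 • C⁻¹) = σ ^ 2 • (C * Oᵀ * (A⁻¹ * O)) := by
      rw [mul_smul_comm]
      congr 1
      calc C * Oᵀ * A⁻¹ * O * C * C⁻¹ = C * Oᵀ * (A⁻¹ * O) * (C * C⁻¹) := by
            simp only [Matrix.mul_assoc]
        _ = C * Oᵀ * (A⁻¹ * O) := by rw [hC1, Matrix.mul_one]
    calc (C - C * Oᵀ * A⁻¹ * O * C) * B
        = C * (Oᵀ * O) + C * (σ ^ 2 • C⁻¹)
          - (C * Oᵀ * A⁻¹ * O * C * (Oᵀ * O) + C * Oᵀ * A⁻¹ * O * C * (σ ^ 2 • C⁻¹)) := by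
          rw [hBdef, Matrix.sub_mul, Matrix.mul_add, Matrix.mul_add]
      _ = C * (Oᵀ * O) + σ ^ 2 • (1 : Matrix (Fin m) (Fin m) ℝ)
          - (C * Oᵀ * O - σ ^ 2 • (C * Oᵀ * (A⁻¹ * O)) + σ ^ 2 • (C * Oᵀ * (A⁻¹ * O))) := by
          rw [h3, h4, mul_smul_comm, hC1]
      _ = σ ^ 2 • (1 : Matrix (Fin m) (Fin m) ℝ) := by
          rw [sub_add_cancel, ← Matrix.mul_assoc]
          abel
  have hM : C - C * Oᵀ * A⁻¹ * O * C = σ ^ 2 • B⁻¹ := by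
    have hB1 : B * B⁻¹ = 1 := mul_nonsing_inv B hB.det_pos.ne'.isUnit
    have := congrArg (fun X => X * B⁻¹) key
    simpa only [Matrix.mul_assoc, hB1, Matrix.mul_one, smul_mul_assoc, Matrix.one_mul]
      using this
  rw [hM, det_smul, Fintype.card_fin, det_nonsing_inv, Real.log_mul (by positivity)
    (by simp [hB.det_pos.ne']), Real.log_pow, Ring.inverse_eq_inv, Real.log_inv,
    Real.log_pow]
  push_cast
  ring
end

section
/- Let M₁, ..., Mₙ be n×n positive semidefinite matrices and Cbar an n×n positive definite matrix. The set function f(S) = log det(Cbar + Σ_{i∈S} Mᵢ) is submodular: for all S ⊆ S' ⊆ {1,...,n} and a ∉ S', f(S ∪ {a}) − f(S) ≥ f(S' ∪ {a}) − f(S'). -/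
open Matrix

variable {k : Type*} [Fintype k] [DecidableEq k]

section
open scoped MatrixOrder

noncomputable def Matrix.PosSemidef.sqrt {A : Matrix k k ℝ} (_ : A.PosSemidef) : Matrix k k ℝ :=
  CFC.sqrt A

lemma Matrix.PosSemidef.sqrt_mul_self {A : Matrix k k ℝ} (hA : A.PosSemidef) :
    hA.sqrt * hA.sqrt = A :=
  CFC.sqrt_mul_sqrt_self A (Matrix.nonneg_iff_posSemidef.mpr hA)

lemma Matrix.PosSemidef.posSemidef_sqrt {A : Matrix k k ℝ} (hA : A.PosSemidef) :
    hA.sqrt.PosSemidef :=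
  Matrix.nonneg_iff_posSemidef.mp (CFC.sqrt_nonneg A)

end

private lemma one_le_det_one_add {W : Matrix k k ℝ} (hW : W.PosSemidef) :
    1 ≤ (1 + W).det := by
  have hUU : (hW.1.eigenvectorUnitary : Matrix k k ℝ) * star (hW.1.eigenvectorUnitary : Matrix k k ℝ) = 1 :=
    (Matrix.mem_unitaryGroup_iff).mp hW.1.eigenvectorUnitary.2
  have h1 : (1 : Matrix k k ℝ) + W =
      (hW.1.eigenvectorUnitary : Matrix k k ℝ) *
        (1 + diagonal (RCLike.ofReal ∘ hW.1.eigenvalues)) *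
        star (hW.1.eigenvectorUnitary : Matrix k k ℝ) := by
    rw [mul_add, add_mul, mul_one, hUU]
    congr 1
    exact hW.1.spectral_theorem
  rw [h1, det_mul_right_comm, hUU, one_mul]
  have : (1 : Matrix k k ℝ) + diagonal (RCLike.ofReal ∘ hW.1.eigenvalues)
      = diagonal (fun i => 1 + hW.1.eigenvalues i) := by
    rw [← diagonal_one, diagonal_add]
    congr 1
  rw [this, det_diagonal]
  have := Finset.prod_le_prod (s := Finset.univ) (f := fun _ : k => (1:ℝ))
    (g := fun i => 1 + hW.1.eigenvalues i) (fun i _ => zero_le_one)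
    (fun i _ => by have := hW.eigenvalues_nonneg i; linarith)
  simpa using this

private lemma det_add_eq {A D : Matrix k k ℝ} (hA : A.PosDef) (hD : D.PosSemidef) :
    (A + D).det = A.det * (1 + hD.sqrt * A⁻¹ * hD.sqrt).det := by
  have hdet : IsUnit A.det := hA.det_pos.ne'.isUnit
  have h1 : A + D = A * (1 + A⁻¹ * D) := by
    rw [mul_add, mul_one, ← mul_assoc, Matrix.mul_nonsing_inv A hdet, one_mul]
  rw [h1, det_mul]
  congr 1
  conv_lhs => rw [← hD.sqrt_mul_self, ← mul_assoc]
  rw [det_one_add_mul_comm, ← mul_assoc]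

private lemma det_le_det_add {A D : Matrix k k ℝ} (hA : A.PosDef) (hD : D.PosSemidef) :
    A.det ≤ (A + D).det := by
  rw [det_add_eq hA hD]
  have hpsd : (hD.sqrt * A⁻¹ * hD.sqrt).PosSemidef := by
    have := hA.inv.posSemidef.mul_mul_conjTranspose_same hD.sqrt
    rwa [hD.posSemidef_sqrt.isHermitian.eq] at this
  have h1 := one_le_det_one_add hpsd
  nlinarith [hA.det_pos]

private lemma inv_sub_inv_psd {A P : Matrix k k ℝ} (hA : A.PosDef) (hP : P.PosSemidef) :
    (A⁻¹ - (A + P)⁻¹).PosSemidef := by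
  set B := A + P with hBdef
  have hB : B.PosDef := hA.add_posSemidef hP
  have hAd : IsUnit A.det := hA.det_pos.ne'.isUnit
  have hBd : IsUnit B.det := hB.det_pos.ne'.isUnit
  have hA2 : A⁻¹ * A = 1 := Matrix.nonsing_inv_mul A hAd
  have hB1 : B * B⁻¹ = 1 := Matrix.mul_nonsing_inv B hBd
  have hB2 : B⁻¹ * B = 1 := Matrix.nonsing_inv_mul B hBd
  have e1 : A⁻¹ - B⁻¹ = B⁻¹ * P * A⁻¹ := by
    have hP' : P = B - A := by rw [hBdef, add_sub_cancel_left]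
    rw [hP', mul_sub, sub_mul, hB2, one_mul, mul_assoc,
      Matrix.mul_nonsing_inv A hAd, mul_one]
  have expand : B⁻¹ * P * A⁻¹ * B = B⁻¹ * P * A⁻¹ * A + B⁻¹ * P * A⁻¹ * P := by
    rw [hBdef, mul_add]
  have key : B⁻¹ * P * A⁻¹ = B⁻¹ * P * B⁻¹ + B⁻¹ * P * A⁻¹ * (P * B⁻¹) :=
    calc B⁻¹ * P * A⁻¹
        = B⁻¹ * P * A⁻¹ * B * B⁻¹ := by rw [mul_assoc _ B B⁻¹, hB1, mul_one]
      _ = (B⁻¹ * P * A⁻¹ * A + B⁻¹ * P * A⁻¹ * P) * B⁻¹ := by rw [expand]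
      _ = (B⁻¹ * P + B⁻¹ * P * A⁻¹ * P) * B⁻¹ := by
            rw [mul_assoc (B⁻¹ * P) A⁻¹ A, hA2, mul_one]
      _ = B⁻¹ * P * B⁻¹ + B⁻¹ * P * A⁻¹ * (P * B⁻¹) := by noncomm_ring
  have e2 : A⁻¹ - B⁻¹ = B⁻¹ * P * B⁻¹ᴴ + (B⁻¹ * P) * A⁻¹ * (B⁻¹ * P)ᴴ := by
    rw [conjTranspose_mul, hP.isHermitian.eq, hB.isHermitian.inv.eq, e1]
    exact key
  rw [e2]
  exact (hP.mul_mul_conjTranspose_same B⁻¹).add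
    (hA.inv.posSemidef.mul_mul_conjTranspose_same (B⁻¹ * P))


/-- The set function `f(S) = log det(Cbar + ∑_{i ∈ S} Mᵢ)` is submodular:
for `S ⊆ S'` and `a ∉ S'`, `f(S ∪ {a}) - f(S) ≥ f(S' ∪ {a}) - f(S')`. -/
theorem logdet_set_function_submodular
    {n m : ℕ} (M : Fin n → Matrix (Fin m) (Fin m) ℝ)
    (Cbar : Matrix (Fin m) (Fin m) ℝ)
    (hM : ∀ i, (M i).PosSemidef) (hC : Cbar.PosDef)
    (S S' : Finset (Fin n)) (hSS' : S ⊆ S') (a : Fin n) (ha : a ∉ S') :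
    Real.log (Cbar + ∑ i ∈ insert a S', M i).det
      - Real.log (Cbar + ∑ i ∈ S', M i).det
    ≤ Real.log (Cbar + ∑ i ∈ insert a S, M i).det
      - Real.log (Cbar + ∑ i ∈ S, M i).det := by
  classical
  have psum : ∀ T : Finset (Fin n), (∑ i ∈ T, M i).PosSemidef := fun T =>
    Finset.sum_induction M Matrix.PosSemidef (fun x y hx hy => hx.add hy)
      Matrix.PosSemidef.zero (fun i _ => hM i)
  have haS : a ∉ S := fun h => ha (hSS' h)
  set A : Matrix (Fin m) (Fin m) ℝ := Cbar + ∑ i ∈ S, M i with hAdef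
  set P : Matrix (Fin m) (Fin m) ℝ := ∑ i ∈ S' \ S, M i with hPdef
  set D : Matrix (Fin m) (Fin m) ℝ := M a with hDdef
  have hA : A.PosDef := hC.add_posSemidef (psum S)
  have hP : P.PosSemidef := psum _
  have hD : D.PosSemidef := hM a
  have hB : (A + P).PosDef := hA.add_posSemidef hP
  have hsum : (∑ i ∈ S', M i) = (∑ i ∈ S, M i) + P := by
    rw [hPdef, ← Finset.sum_sdiff hSS']; abel
  have eS' : Cbar + ∑ i ∈ S', M i = A + P := by rw [hsum, hAdef]; abel
  have eiS : Cbar + ∑ i ∈ insert a S, M i = A + D := by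
    rw [Finset.sum_insert haS, hAdef, hDdef]; abel
  have eiS' : Cbar + ∑ i ∈ insert a S', M i = (A + P) + D := by
    rw [Finset.sum_insert ha, hsum, hAdef, hDdef]; abel
  rw [eS', eiS, eiS']
  set B : Matrix (Fin m) (Fin m) ℝ := A + P with hBdef
  -- determinant factorizations
  have dA : (A + D).det = A.det * (1 + hD.sqrt * A⁻¹ * hD.sqrt).det := det_add_eq hA hD
  have dB : (B + D).det = B.det * (1 + hD.sqrt * B⁻¹ * hD.sqrt).det := det_add_eq hB hD
  have psdY : (hD.sqrt * B⁻¹ * hD.sqrt).PosSemidef := by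
    have := hB.inv.posSemidef.mul_mul_conjTranspose_same hD.sqrt
    rwa [hD.posSemidef_sqrt.isHermitian.eq] at this
  have psdX : (hD.sqrt * A⁻¹ * hD.sqrt).PosSemidef := by
    have := hA.inv.posSemidef.mul_mul_conjTranspose_same hD.sqrt
    rwa [hD.posSemidef_sqrt.isHermitian.eq] at this
  have hYone : (1 : ℝ) ≤ (1 + hD.sqrt * B⁻¹ * hD.sqrt).det := one_le_det_one_add psdY
  have hXone : (1 : ℝ) ≤ (1 + hD.sqrt * A⁻¹ * hD.sqrt).det := one_le_det_one_add psdX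
  -- monotonicity step
  have hdiffpsd : (hD.sqrt * A⁻¹ * hD.sqrt - hD.sqrt * B⁻¹ * hD.sqrt).PosSemidef := by
    have h1 := (inv_sub_inv_psd hA hP).mul_mul_conjTranspose_same hD.sqrt
    rw [hD.posSemidef_sqrt.isHermitian.eq] at h1
    have h2 : hD.sqrt * (A⁻¹ - B⁻¹) * hD.sqrt
        = hD.sqrt * A⁻¹ * hD.sqrt - hD.sqrt * B⁻¹ * hD.sqrt := by noncomm_ring
    rwa [h2] at h1
  have ineq : (1 + hD.sqrt * B⁻¹ * hD.sqrt).det ≤ (1 + hD.sqrt * A⁻¹ * hD.sqrt).det := by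
    have hsplit : (1 : Matrix (Fin m) (Fin m) ℝ) + hD.sqrt * A⁻¹ * hD.sqrt
        = (1 + hD.sqrt * B⁻¹ * hD.sqrt)
          + (hD.sqrt * A⁻¹ * hD.sqrt - hD.sqrt * B⁻¹ * hD.sqrt) := by abel
    rw [hsplit]
    exact det_le_det_add (Matrix.PosDef.one.add_posSemidef psdY) hdiffpsd
  rw [dA, dB, Real.log_mul hA.det_pos.ne' (by linarith), Real.log_mul hB.det_pos.ne' (by linarith)]
  have hlog : Real.log (1 + hD.sqrt * B⁻¹ * hD.sqrt).det
      ≤ Real.log (1 + hD.sqrt * A⁻¹ * hD.sqrt).det :=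
    Real.log_le_log (by linarith) ineq
  linarith
end

section
/- Let M₁, ..., Mₙ be m×m positive semidefinite matrices and Cbar an m×m positive definite matrix. The set function g(S) = −log det(Cbar + Σ_{i∈S} Mᵢ) (the log-det estimation error up to an additive constant) is supermodular and non-increasing in S. -/
open Matrix

section Helpers

variable {m : ℕ}

private lemma Psym_dot' {P : Matrix (Fin m) (Fin m) ℝ} (hP : P.IsHermitian) (a b : Fin m → ℝ) :
    a ⬝ᵥ (P *ᵥ b) = b ⬝ᵥ (P *ᵥ a) := by
  have ht : Pᵀ = P := by
    have := hP.eq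
    simpa [Matrix.conjTranspose, Matrix.map, Matrix.transpose] using this
  rw [Matrix.dotProduct_mulVec, ← Matrix.mulVec_transpose, dotProduct_comm, ht]

private lemma quad_le' {P : Matrix (Fin m) (Fin m) ℝ} (hP : P.PosDef) (v x : Fin m → ℝ) :
    2 * (v ⬝ᵥ x) ≤ x ⬝ᵥ (P *ᵥ x) + v ⬝ᵥ (P⁻¹ *ᵥ v) := by
  have hinv : P * P⁻¹ = 1 := Matrix.mul_nonsing_inv P hP.det_pos.ne'.isUnit
  have hPv : P *ᵥ (P⁻¹ *ᵥ v) = v := by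
    rw [Matrix.mulVec_mulVec, hinv, Matrix.one_mulVec]
  have h0 := hP.posSemidef.dotProduct_mulVec_nonneg (x - P⁻¹ *ᵥ v)
  simp only [star_trivial] at h0
  rw [Matrix.mulVec_sub, sub_dotProduct, dotProduct_sub, dotProduct_sub,
    hPv] at h0
  have h1 : (P⁻¹ *ᵥ v) ⬝ᵥ (P *ᵥ x) = x ⬝ᵥ v := by
    rw [Psym_dot' hP.isHermitian, hPv, dotProduct_comm]
  have h2 : x ⬝ᵥ v = v ⬝ᵥ x := dotProduct_comm _ _
  have h3 : (P⁻¹ *ᵥ v) ⬝ᵥ v = v ⬝ᵥ (P⁻¹ *ᵥ v) := dotProduct_comm _ _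
  nlinarith [h0]

private lemma inv_quad_le' {P D : Matrix (Fin m) (Fin m) ℝ} (hP : P.PosDef) (hD : D.PosSemidef)
    (v : Fin m → ℝ) : v ⬝ᵥ ((P + D)⁻¹ *ᵥ v) ≤ v ⬝ᵥ (P⁻¹ *ᵥ v) := by
  have hPD : (P + D).PosDef := hP.add_posSemidef hD
  set x := (P + D)⁻¹ *ᵥ v with hx
  have hPDx : (P + D) *ᵥ x = v := by
    rw [hx, Matrix.mulVec_mulVec, Matrix.mul_nonsing_inv _ hPD.det_pos.ne'.isUnit,
      Matrix.one_mulVec]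
  have hq := quad_le' hP v x
  have hDx : 0 ≤ x ⬝ᵥ (D *ᵥ x) := by simpa using hD.dotProduct_mulVec_nonneg x
  have hPx : x ⬝ᵥ (P *ᵥ x) = x ⬝ᵥ v - x ⬝ᵥ (D *ᵥ x) := by
    have h : x ⬝ᵥ ((P + D) *ᵥ x) = x ⬝ᵥ (P *ᵥ x) + x ⬝ᵥ (D *ᵥ x) := by
      rw [Matrix.add_mulVec, dotProduct_add]
    rw [hPDx] at h; linarith
  have h2 : x ⬝ᵥ v = v ⬝ᵥ x := dotProduct_comm _ _
  linarith

private lemma det_rankone' {P : Matrix (Fin m) (Fin m) ℝ} (hP : P.PosDef) (v : Fin m → ℝ) :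
    (P + vecMulVec v v).det = P.det * (1 + v ⬝ᵥ (P⁻¹ *ᵥ v)) := by
  rw [vecMulVec_eq Unit, Matrix.det_add_replicateCol_mul_replicateRow hP.det_pos.ne'.isUnit]
  congr 1
  rw [Matrix.det_unique]
  simp only [Pi.add_apply, Matrix.add_apply, Matrix.one_apply_eq, Matrix.mul_apply,
    Matrix.replicateRow_apply, Matrix.replicateCol_apply, Matrix.mulVec, dotProduct, Finset.sum_mul,
    Finset.mul_sum]
  congr 1
  rw [Finset.sum_comm]
  refine Finset.sum_congr rfl fun i _ => ?_
  refine Finset.sum_congr rfl fun j _ => ?_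
  ring

private lemma vvT_posSemidef (v : Fin m → ℝ) : (vecMulVec v v).PosSemidef := by
  refine Matrix.PosSemidef.of_dotProduct_mulVec_nonneg ?_ ?_
  · ext i j
    simp [Matrix.conjTranspose, vecMulVec_apply, mul_comm]
  · intro x
    have h : x ⬝ᵥ (vecMulVec v v *ᵥ x) = (v ⬝ᵥ x) * (v ⬝ᵥ x) := by
      simp only [Matrix.mulVec, dotProduct, vecMulVec_apply, Finset.mul_sum,
        Finset.sum_mul]
      rw [Finset.sum_comm]
      refine Finset.sum_congr rfl fun i _ => ?_
      refine Finset.sum_congr rfl fun j _ => ?_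
      ring
    simpa [h] using mul_self_nonneg (v ⬝ᵥ x)

private lemma quad_nonneg {P : Matrix (Fin m) (Fin m) ℝ} (hP : P.PosDef) (v : Fin m → ℝ) :
    0 ≤ v ⬝ᵥ (P⁻¹ *ᵥ v) := by simpa using hP.inv.posSemidef.dotProduct_mulVec_nonneg v

/-- rank-one key inequality -/
private lemma logdet_rankone {P D : Matrix (Fin m) (Fin m) ℝ} (hP : P.PosDef)
    (hD : D.PosSemidef) (v : Fin m → ℝ) :
    Real.log (P + D + vecMulVec v v).det - Real.log (P + D).det
      ≤ Real.log (P + vecMulVec v v).det - Real.log P.det := by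
  have hPD : (P + D).PosDef := hP.add_posSemidef hD
  have hq1 : 0 ≤ v ⬝ᵥ ((P + D)⁻¹ *ᵥ v) := quad_nonneg hPD v
  have hq2 : 0 ≤ v ⬝ᵥ (P⁻¹ *ᵥ v) := quad_nonneg hP v
  rw [det_rankone' hPD v, det_rankone' hP v,
    Real.log_mul hPD.det_pos.ne' (by linarith), Real.log_mul hP.det_pos.ne' (by linarith)]
  have hle := inv_quad_le' hP hD v
  have := (Real.log_le_log_iff (by linarith) (by linarith)).mpr
    (show (1 : ℝ) + v ⬝ᵥ ((P + D)⁻¹ *ᵥ v) ≤ 1 + v ⬝ᵥ (P⁻¹ *ᵥ v) by linarith)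
  linarith

/-- general key inequality -/
private lemma logdet_key {P D Mx : Matrix (Fin m) (Fin m) ℝ} (hP : P.PosDef)
    (hD : D.PosSemidef) (hMx : Mx.PosSemidef) :
    Real.log (P + D + Mx).det - Real.log (P + D).det
      ≤ Real.log (P + Mx).det - Real.log P.det := by
  obtain ⟨B, hB⟩ : ∃ B : Matrix (Fin m) (Fin m) ℝ, Mx = Bᴴ * B := by
    open scoped MatrixOrder in exact CStarAlgebra.nonneg_iff_eq_star_mul_self.mp hMx.nonneg
  have hMeq : Mx = ∑ k : Fin m, vecMulVec (fun i => B k i) (fun j => B k j) := by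
    rw [hB]; ext i j
    simp [Matrix.mul_apply, Matrix.conjTranspose, vecMulVec_apply, Matrix.sum_apply]
  subst hMeq
  suffices h : ∀ K : Finset (Fin m),
      Real.log (P + D + ∑ k ∈ K, vecMulVec (fun i => B k i) (fun j => B k j)).det
          - Real.log (P + D).det
        ≤ Real.log (P + ∑ k ∈ K, vecMulVec (fun i => B k i) (fun j => B k j)).det
          - Real.log P.det by
    exact h Finset.univ
  intro K
  induction K using Finset.induction_on with
  | empty => simp
  | @insert k K hk ih =>
    set T := ∑ k ∈ K, vecMulVec (fun i => B k i) (fun j => B k j) with hT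
    have hTpsd : T.PosSemidef := by
      rw [hT]
      refine Finset.sum_induction _ _ (fun a b ha hb => ha.add hb) Matrix.PosSemidef.zero ?_
      exact fun i _ => vvT_posSemidef _
    have hPT : (P + T).PosDef := hP.add_posSemidef hTpsd
    rw [Finset.sum_insert hk]
    have e1 : P + D + (vecMulVec (fun i => B k i) (fun j => B k j) + T)
        = P + T + D + vecMulVec (fun i => B k i) (fun j => B k j) := by abel
    have e2 : P + (vecMulVec (fun i => B k i) (fun j => B k j) + T)
        = P + T + vecMulVec (fun i => B k i) (fun j => B k j) := by abel
    have e3 : P + D + T = P + T + D := by abel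
    have h1 := logdet_rankone hPT hD (fun i => B k i)
    have hvv :
        vecMulVec (fun i => B k i) (fun i => B k i)
          = vecMulVec (fun i => B k i) (fun j => B k j) := rfl
    rw [hvv] at h1
    have h2 : Real.log (P + D + T).det - Real.log (P + D).det
        ≤ Real.log (P + T).det - Real.log P.det := ih
    rw [e1, e2]
    rw [e3] at h2
    linarith

private lemma det_le_det_add_s9 {P D : Matrix (Fin m) (Fin m) ℝ} (hP : P.PosDef)
    (hD : D.PosSemidef) : P.det ≤ (P + D).det := by
  obtain ⟨B, hB⟩ : ∃ B : Matrix (Fin m) (Fin m) ℝ, D = Bᴴ * B := by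
    open scoped MatrixOrder in exact CStarAlgebra.nonneg_iff_eq_star_mul_self.mp hD.nonneg
  have hMeq : D = ∑ k : Fin m, vecMulVec (fun i => B k i) (fun j => B k j) := by
    rw [hB]; ext i j
    simp [Matrix.mul_apply, Matrix.conjTranspose, vecMulVec_apply, Matrix.sum_apply]
  subst hMeq
  suffices h : ∀ K : Finset (Fin m),
      P.det ≤ (P + ∑ k ∈ K, vecMulVec (fun i => B k i) (fun j => B k j)).det by
    exact h Finset.univ
  intro K
  induction K using Finset.induction_on with
  | empty => simp
  | @insert k K hk ih =>
    set T := ∑ k ∈ K, vecMulVec (fun i => B k i) (fun j => B k j) with hT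
    have hTpsd : T.PosSemidef := by
      rw [hT]
      refine Finset.sum_induction _ _ (fun a b ha hb => ha.add hb) Matrix.PosSemidef.zero ?_
      exact fun i _ => vvT_posSemidef _
    have hPT : (P + T).PosDef := hP.add_posSemidef hTpsd
    rw [Finset.sum_insert hk]
    have e2 : P + (vecMulVec (fun i => B k i) (fun j => B k j) + T)
        = P + T + vecMulVec (fun i => B k i) (fun j => B k j) := by abel
    rw [e2]
    have hdr := det_rankone' hPT (fun i => B k i)
    have hvv :
        vecMulVec (fun i => B k i) (fun i => B k i)
          = vecMulVec (fun i => B k i) (fun j => B k j) := rfl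
    rw [hvv] at hdr
    have hq : 0 ≤ (fun i => B k i) ⬝ᵥ ((P + T)⁻¹ *ᵥ fun i => B k i) := quad_nonneg hPT _
    nlinarith [hPT.det_pos, ih]

end Helpers

/-- The set function `g(S) = - log det(Cbar + ∑_{i ∈ S} Mᵢ)` (the log-det
estimation error up to an additive constant) is supermodular and
non-increasing in `S`. -/
theorem neg_logdet_supermodular_and_nonincreasing
    {n m : ℕ} (M : Fin n → Matrix (Fin m) (Fin m) ℝ)
    (Cbar : Matrix (Fin m) (Fin m) ℝ)
    (hM : ∀ i, (M i).PosSemidef) (hC : Cbar.PosDef) :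
    (∀ S S' : Finset (Fin n), S ⊆ S' → ∀ a ∉ S',
        (- Real.log (Cbar + ∑ i ∈ insert a S, M i).det)
          - (- Real.log (Cbar + ∑ i ∈ S, M i).det)
        ≤ (- Real.log (Cbar + ∑ i ∈ insert a S', M i).det)
          - (- Real.log (Cbar + ∑ i ∈ S', M i).det)) ∧
    (∀ S S' : Finset (Fin n), S ⊆ S' →
        - Real.log (Cbar + ∑ i ∈ S', M i).det
          ≤ - Real.log (Cbar + ∑ i ∈ S, M i).det) := by
  have hsum : ∀ S : Finset (Fin n), (∑ i ∈ S, M i).PosSemidef := fun S =>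
    Finset.sum_induction _ _ (fun a b ha hb => ha.add hb) Matrix.PosSemidef.zero
      (fun i _ => hM i)
  have hCS : ∀ S : Finset (Fin n), (Cbar + ∑ i ∈ S, M i).PosDef := fun S =>
    hC.add_posSemidef (hsum S)
  constructor
  · intro S S' hss a ha
    have haS : a ∉ S := fun h => ha (hss h)
    have hsdiff : (∑ i ∈ S', M i) = ∑ i ∈ S' \ S, M i + ∑ i ∈ S, M i :=
      (Finset.sum_sdiff hss).symm
    have hDpsd : (∑ i ∈ S' \ S, M i).PosSemidef := hsum _
    have key := logdet_key (P := Cbar + ∑ i ∈ S, M i) (D := ∑ i ∈ S' \ S, M i)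
      (Mx := M a) (hCS S) hDpsd (hM a)
    rw [Finset.sum_insert haS, Finset.sum_insert ha, hsdiff]
    have e1 : Cbar + (M a + ∑ i ∈ S, M i) = Cbar + ∑ i ∈ S, M i + M a := by abel
    have e2 : Cbar + (M a + (∑ i ∈ S' \ S, M i + ∑ i ∈ S, M i))
        = Cbar + ∑ i ∈ S, M i + ∑ i ∈ S' \ S, M i + M a := by abel
    have e3 : Cbar + (∑ i ∈ S' \ S, M i + ∑ i ∈ S, M i)
        = Cbar + ∑ i ∈ S, M i + ∑ i ∈ S' \ S, M i := by abel
    rw [e1, e2, e3]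
    linarith
  · intro S S' hss
    have hsdiff : (∑ i ∈ S', M i) = ∑ i ∈ S' \ S, M i + ∑ i ∈ S, M i :=
      (Finset.sum_sdiff hss).symm
    have hDpsd : (∑ i ∈ S' \ S, M i).PosSemidef := hsum _
    have hdet := det_le_det_add_s9 (P := Cbar + ∑ i ∈ S, M i) (D := ∑ i ∈ S' \ S, M i)
      (hCS S) hDpsd
    rw [hsdiff]
    have e3 : Cbar + (∑ i ∈ S' \ S, M i + ∑ i ∈ S, M i)
        = Cbar + ∑ i ∈ S, M i + ∑ i ∈ S' \ S, M i := by abel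
    rw [e3]
    have hlog := (Real.log_le_log_iff (hCS S).det_pos
      (lt_of_lt_of_le (hCS S).det_pos hdet)).mpr hdet
    linarith
end

section
/- Let t ↦ O(t) be the matrix path O(t) = Cbar + O₁ + t(O₂ − O₁) for t ∈ [0,1], where Cbar ≻ 0 and 0 ⪯ O₁ ⪯ O₂. Then for any positive semidefinite matrix Oa, the function hbar(t) = log det(O(t) + Oa) − log det(O(t)) is non-increasing in t on [0,1]; in particular log det(Cbar + O₂ + Oa) − log det(Cbar + O₂) ≤ log det(Cbar + O₁ + Oa) − log det(Cbar + O₁). -/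
open Matrix

section AuxLogDet
set_option linter.unusedSectionVars false
variable {m : Type*} [Fintype m] [DecidableEq m]
open scoped MatrixOrder

lemma psd_smul {P : Matrix m m ℝ} (hP : P.PosSemidef) {c : ℝ} (hc : 0 ≤ c) :
    (c • P).PosSemidef := by
  refine .of_dotProduct_mulVec_nonneg ?_ fun x => ?_
  · unfold Matrix.IsHermitian
    rw [conjTranspose_smul, hP.1.eq]
    simp
  · rw [smul_mulVec, dotProduct_smul, smul_eq_mul]
    exact mul_nonneg hc (hP.dotProduct_mulVec_nonneg x)

lemma one_le_det_one_add_s11 {P : Matrix m m ℝ} (hP : P.PosSemidef) :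
    1 ≤ (1 + P).det := by
  have hM : (1 + P).IsHermitian := Matrix.isHermitian_one.add hP.1
  have key : ∀ i, 1 ≤ hM.eigenvalues i := by
    intro i
    have h := hM.eigenvalues_eq i
    set v : m → ℝ := ⇑(hM.eigenvectorBasis i) with hv
    have hnorm : star v ⬝ᵥ v = 1 := by
      have h1 : ‖hM.eigenvectorBasis i‖ = 1 := hM.eigenvectorBasis.orthonormal.1 i
      have : (inner ℝ (hM.eigenvectorBasis i) (hM.eigenvectorBasis i) : ℝ) = 1 := by
        rw [real_inner_self_eq_norm_sq, h1]; norm_num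
      rw [← this, EuclideanSpace.inner_eq_star_dotProduct]; rw [dotProduct_comm]
    rw [h]
    have : star v ⬝ᵥ ((1 + P) *ᵥ v) = star v ⬝ᵥ v + star v ⬝ᵥ (P *ᵥ v) := by
      rw [add_mulVec, dotProduct_add, one_mulVec]
    simp only [RCLike.re_to_real] at *
    rw [this, hnorm]
    have := hP.dotProduct_mulVec_nonneg v
    linarith
  have hdet := hM.det_eq_prod_eigenvalues
  simp only [RCLike.ofReal_real_eq_id, id] at hdet
  rw [hdet]
  have := Finset.prod_le_prod (s := Finset.univ) (f := fun _ => (1:ℝ))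
    (g := hM.eigenvalues) (fun i _ => by norm_num) (fun i _ => key i)
  simpa using this

lemma det_mono {X Y : Matrix m m ℝ} (hX : X.PosDef) (hXY : (Y - X).PosSemidef) :
    X.det ≤ Y.det := by
  set S := CFC.sqrt X with hS
  have hSps : S.PosSemidef := (CFC.sqrt_nonneg X).posSemidef
  have hSS : S * S = X := CFC.sqrt_mul_sqrt_self X hX.posSemidef.nonneg
  have hSunit : IsUnit S.det := by
    have : S.det * S.det = X.det := by rw [← det_mul, hSS]
    have hx := hX.det_pos
    refine isUnit_iff_ne_zero.2 ?_
    intro h0; rw [h0, mul_zero] at this; linarith [this ▸ hx]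
  have hSinv : S * S⁻¹ = 1 := mul_nonsing_inv _ hSunit
  have hSinv' : S⁻¹ * S = 1 := nonsing_inv_mul _ hSunit
  set Q := S⁻¹ * (Y - X) * S⁻¹ with hQ
  have hQps : Q.PosSemidef := by
    have := hXY.conjTranspose_mul_mul_same S⁻¹
    rwa [hSps.1.inv.eq] at this
  have hY : Y = S * (1 + Q) * S := by
    rw [hQ]
    rw [Matrix.mul_add, Matrix.mul_one, Matrix.add_mul]
    rw [hSS]
    rw [show S * (S⁻¹ * (Y - X) * S⁻¹) * S = (S * S⁻¹) * (Y - X) * (S⁻¹ * S) by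
      simp only [Matrix.mul_assoc]]
    rw [hSinv, hSinv', Matrix.one_mul, Matrix.mul_one]
    abel
  have : Y.det = X.det * (1 + Q).det := by
    rw [hY, det_mul, det_mul, ← hSS, det_mul]; ring
  rw [this]
  nlinarith [one_le_det_one_add_s11 hQps, hX.det_pos]

lemma sqrt_det_isUnit {M : Matrix m m ℝ} (hM : M.PosSemidef) (hMu : IsUnit M.det) :
    IsUnit (CFC.sqrt M).det := by
  have : (CFC.sqrt M).det * (CFC.sqrt M).det = M.det := by rw [← det_mul, CFC.sqrt_mul_sqrt_self M hM.nonneg]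
  refine isUnit_iff_ne_zero.2 fun h0 => ?_
  rw [h0, mul_zero] at this
  exact isUnit_iff_ne_zero.1 hMu this.symm

lemma one_sub_inv_psd {M : Matrix m m ℝ} (hM : M.PosSemidef) (hMu : IsUnit M.det)
    (h1 : (M - 1).PosSemidef) : (1 - M⁻¹).PosSemidef := by
  set S := CFC.sqrt M with hSdef
  have hSps : S.PosSemidef := (CFC.sqrt_nonneg M).posSemidef
  have hSS : S * S = M := CFC.sqrt_mul_sqrt_self M hM.nonneg
  have hSu : IsUnit S.det := sqrt_det_isUnit hM hMu
  have hSinv : S * S⁻¹ = 1 := mul_nonsing_inv _ hSu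
  have hSinv' : S⁻¹ * S = 1 := nonsing_inv_mul _ hSu
  have h2 : S⁻¹ * M * S⁻¹ = 1 := by
    rw [← hSS, show S⁻¹ * (S * S) * S⁻¹ = (S⁻¹ * S) * (S * S⁻¹) by
      simp only [Matrix.mul_assoc], hSinv', hSinv, Matrix.one_mul]
  have h3 : S⁻¹ * S⁻¹ = M⁻¹ := by rw [← hSS, Matrix.mul_inv_rev]
  have key : 1 - M⁻¹ = S⁻¹ * (M - 1) * S⁻¹ := by
    rw [Matrix.mul_sub, Matrix.sub_mul, Matrix.mul_one, h2, h3]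
  rw [key]
  have := h1.conjTranspose_mul_mul_same S⁻¹
  rwa [hSps.1.inv.eq] at this

lemma inv_sub_inv_psd_s11 {A B : Matrix m m ℝ} (hA : A.PosDef) (hB : B.PosDef)
    (hAB : (B - A).PosSemidef) : (A⁻¹ - B⁻¹).PosSemidef := by
  have hAu : IsUnit A.det := isUnit_iff_ne_zero.2 hA.det_pos.ne'
  have hBu : IsUnit B.det := isUnit_iff_ne_zero.2 hB.det_pos.ne'
  set T := CFC.sqrt A with hTdef
  have hTps : T.PosSemidef := (CFC.sqrt_nonneg A).posSemidef
  have hTT : T * T = A := CFC.sqrt_mul_sqrt_self A hA.posSemidef.nonneg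
  have hTu : IsUnit T.det := sqrt_det_isUnit hA.posSemidef hAu
  have hTinv : T * T⁻¹ = 1 := mul_nonsing_inv _ hTu
  have hTinv' : T⁻¹ * T = 1 := nonsing_inv_mul _ hTu
  set M := T⁻¹ * B * T⁻¹ with hMdef
  have hMps : M.PosSemidef := by
    have := hB.posSemidef.conjTranspose_mul_mul_same T⁻¹
    rwa [hTps.1.inv.eq] at this
  have hMu : IsUnit M.det := by
    rw [hMdef, det_mul, det_mul, det_nonsing_inv, Ring.inverse_eq_inv]
    exact (hTu.inv.mul hBu).mul hTu.inv
  have hTAT : T⁻¹ * A * T⁻¹ = 1 := by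
    rw [← hTT, show T⁻¹ * (T * T) * T⁻¹ = (T⁻¹ * T) * (T * T⁻¹) by
      simp only [Matrix.mul_assoc], hTinv', hTinv, Matrix.one_mul]
  have hM1 : (M - 1).PosSemidef := by
    have h : M - 1 = T⁻¹ * (B - A) * T⁻¹ := by
      rw [Matrix.mul_sub, Matrix.sub_mul, hTAT]
    rw [h]
    have := hAB.conjTranspose_mul_mul_same T⁻¹
    rwa [hTps.1.inv.eq] at this
  have hMinv : M⁻¹ = T * B⁻¹ * T := by
    rw [hMdef, Matrix.mul_inv_rev, Matrix.mul_inv_rev,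
      nonsing_inv_nonsing_inv _ hTu, Matrix.mul_assoc]
  have key : A⁻¹ - B⁻¹ = T⁻¹ * (1 - M⁻¹) * T⁻¹ := by
    rw [Matrix.mul_sub, Matrix.sub_mul, Matrix.mul_one, hMinv]
    have e1 : T⁻¹ * T⁻¹ = A⁻¹ := by rw [← hTT, Matrix.mul_inv_rev]
    have e2 : T⁻¹ * (T * B⁻¹ * T) * T⁻¹ = B⁻¹ := by
      rw [show T⁻¹ * (T * B⁻¹ * T) * T⁻¹ = (T⁻¹ * T) * B⁻¹ * (T * T⁻¹) by
        simp only [Matrix.mul_assoc], hTinv', hTinv, Matrix.one_mul, Matrix.mul_one]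
    rw [e1, e2]
  rw [key]
  have := (one_sub_inv_psd hMps hMu hM1).conjTranspose_mul_mul_same T⁻¹
  rwa [hTps.1.inv.eq] at this

lemma logdet_sub_mono {A B Oa : Matrix m m ℝ} (hA : A.PosDef) (hB : B.PosDef)
    (hAB : (B - A).PosSemidef) (hOa : Oa.PosSemidef) :
    Real.log (B + Oa).det - Real.log B.det ≤ Real.log (A + Oa).det - Real.log A.det := by
  obtain ⟨C, rfl⟩ : ∃ C : Matrix m m ℝ, Oa = Cᴴ * C :=
    ⟨CFC.sqrt Oa, by rw [(CFC.sqrt_nonneg Oa).posSemidef.1.eq, CFC.sqrt_mul_sqrt_self Oa hOa.nonneg]⟩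
  have key : ∀ X : Matrix m m ℝ, X.PosDef →
      (X + Cᴴ * C).det = X.det * (1 + C * X⁻¹ * Cᴴ).det := by
    intro X hX
    have hXu : IsUnit X.det := isUnit_iff_ne_zero.2 hX.det_pos.ne'
    have h1 : X + Cᴴ * C = X * (1 + X⁻¹ * Cᴴ * C) := by
      rw [Matrix.mul_add, Matrix.mul_one, show X * (X⁻¹ * Cᴴ * C) = (X * X⁻¹) * Cᴴ * C by
        simp only [Matrix.mul_assoc], mul_nonsing_inv _ hXu, Matrix.one_mul]
    rw [h1, det_mul]
    congr 1
    rw [show (1 : Matrix m m ℝ) + X⁻¹ * Cᴴ * C = 1 + (X⁻¹ * Cᴴ) * C by rw [Matrix.mul_assoc],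
      det_one_add_mul_comm, Matrix.mul_assoc]
  have hQ : ∀ X : Matrix m m ℝ, X.PosDef → (1 + C * X⁻¹ * Cᴴ).PosDef :=
    fun X hX => Matrix.PosDef.add_posSemidef Matrix.PosDef.one
      (hX.inv.posSemidef.mul_mul_conjTranspose_same C)
  have hdiff : (1 + C * A⁻¹ * Cᴴ) - (1 + C * B⁻¹ * Cᴴ) = C * (A⁻¹ - B⁻¹) * Cᴴ := by
    rw [Matrix.mul_sub, Matrix.sub_mul]
    abel
  have hdets : (1 + C * B⁻¹ * Cᴴ).det ≤ (1 + C * A⁻¹ * Cᴴ).det := by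
    apply det_mono (hQ B hB)
    rw [hdiff]
    exact (inv_sub_inv_psd_s11 hA hB hAB).mul_mul_conjTranspose_same C
  rw [key A hA, key B hB,
    Real.log_mul hA.det_pos.ne' (hQ A hA).det_pos.ne',
    Real.log_mul hB.det_pos.ne' (hQ B hB).det_pos.ne']
  have := Real.log_le_log (hQ B hB).det_pos hdets
  linarith

end AuxLogDet

/-- Along the path `O(t) = Cbar + O₁ + t (O₂ - O₁)`, with `Cbar ≻ 0` and
`0 ⪯ O₁ ⪯ O₂`, the function
`hbar(t) = log det(O(t) + Oa) - log det(O(t))` is non-increasing on `[0,1]`;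
in particular
`log det(Cbar + O₂ + Oa) - log det(Cbar + O₂)
  ≤ log det(Cbar + O₁ + Oa) - log det(Cbar + O₁)`. -/
theorem logdet_increment_nonincreasing_along_path
    {n : ℕ} (Cbar O₁ O₂ Oa : Matrix (Fin n) (Fin n) ℝ)
    (hC : Cbar.PosDef) (hO₁ : O₁.PosSemidef) (hO₂ : O₂.PosSemidef)
    (h₁₂ : (O₂ - O₁).PosSemidef) (hOa : Oa.PosSemidef) :
    (∀ s t : ℝ, 0 ≤ s → s ≤ t → t ≤ 1 →
      Real.log ((Cbar + O₁ + t • (O₂ - O₁)) + Oa).det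
        - Real.log (Cbar + O₁ + t • (O₂ - O₁)).det
      ≤ Real.log ((Cbar + O₁ + s • (O₂ - O₁)) + Oa).det
        - Real.log (Cbar + O₁ + s • (O₂ - O₁)).det) ∧
    Real.log (Cbar + O₂ + Oa).det - Real.log (Cbar + O₂).det
      ≤ Real.log (Cbar + O₁ + Oa).det - Real.log (Cbar + O₁).det := by
  have hPD : ∀ s : ℝ, 0 ≤ s → (Cbar + O₁ + s • (O₂ - O₁)).PosDef := by
    intro s hs
    rw [add_assoc]
    exact hC.add_posSemidef (hO₁.add (psd_smul h₁₂ hs))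
  have part1 : ∀ s t : ℝ, 0 ≤ s → s ≤ t → t ≤ 1 →
      Real.log ((Cbar + O₁ + t • (O₂ - O₁)) + Oa).det
        - Real.log (Cbar + O₁ + t • (O₂ - O₁)).det
      ≤ Real.log ((Cbar + O₁ + s • (O₂ - O₁)) + Oa).det
        - Real.log (Cbar + O₁ + s • (O₂ - O₁)).det := by
    intro s t hs hst ht
    apply logdet_sub_mono (hPD s hs) (hPD t (hs.trans hst)) _ hOa
    have h : (Cbar + O₁ + t • (O₂ - O₁)) - (Cbar + O₁ + s • (O₂ - O₁))
        = (t - s) • (O₂ - O₁) := by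
      rw [sub_smul]; abel
    rw [h]
    exact psd_smul h₁₂ (by linarith)
  refine ⟨part1, ?_⟩
  have := part1 0 1 le_rfl zero_le_one le_rfl
  simp only [zero_smul, add_zero, one_smul] at this
  rwa [show Cbar + O₁ + (O₂ - O₁) = Cbar + O₂ by abel] at this
end

section
/- Consider the system x_{k+1} = A_k x_k + w_k, y_k = C x_k + v_k with uncorrelated zero-mean noises, Cov(v_k) = σ² I, σ > 0, and Cov(x₀) ≻ 0 with maximal diagonal entry of Cov(x₀)⁻¹ equal to σ₀⁻². Let μ = max_{m∈[0,k]} ‖A_m‖₂ with μ ≠ 1, and let S be the sensor set (C selects |S| coordinates). Then the minimum mean square error of the optimal linear estimate of x₀ from y₀,...,y_k satisfies mmse(x₀) ≥ n σ² / (|S| (1 − μ^{2(k+1)})/(1 − μ²) + σ² σ₀⁻²). -/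
open Matrix

/-- Spectral norm (operator 2-norm) of a real square matrix. -/
noncomputable def specNorm {n : ℕ} (A : Matrix (Fin n) (Fin n) ℝ) : ℝ :=
  ‖(Matrix.toEuclideanCLM (𝕜 := ℝ) (n := Fin n)) A‖

lemma specNorm_nonneg {n : ℕ} (A : Matrix (Fin n) (Fin n) ℝ) : 0 ≤ specNorm A :=
  norm_nonneg _

lemma specNorm_mul_le {n : ℕ} (A B : Matrix (Fin n) (Fin n) ℝ) :
    specNorm (A * B) ≤ specNorm A * specNorm B := by
  unfold specNorm
  rw [_root_.map_mul]
  exact norm_mul_le _ _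

lemma specNorm_one_le {n : ℕ} : specNorm (1 : Matrix (Fin n) (Fin n) ℝ) ≤ 1 := by
  unfold specNorm
  rw [_root_.map_one]
  exact ContinuousLinearMap.norm_id_le

lemma abs_entry_le_specNorm {n : ℕ} (A : Matrix (Fin n) (Fin n) ℝ) (i j : Fin n) :
    |A i j| ≤ specNorm A := by
  have hx : ((WithLp.equiv 2 (Fin n → ℝ)).symm (Pi.single j 1) : EuclideanSpace ℝ (Fin n))
      = EuclideanSpace.single j (1 : ℝ) := rfl
  have h1 : (Matrix.toEuclideanCLM (𝕜 := ℝ) (n := Fin n)) A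
        ((WithLp.equiv 2 (Fin n → ℝ)).symm (Pi.single j 1)) =
      (WithLp.equiv 2 (Fin n → ℝ)).symm (A.mulVec (Pi.single j 1)) := by
    exact Matrix.toEuclideanCLM_toLp _ _
  have h2 : ‖(WithLp.equiv 2 (Fin n → ℝ)).symm (A.mulVec (Pi.single j 1))‖
      ≤ specNorm A * ‖((WithLp.equiv 2 (Fin n → ℝ)).symm (Pi.single j 1) :
          EuclideanSpace ℝ (Fin n))‖ := by
    rw [← h1]
    exact ContinuousLinearMap.le_opNorm _ _
  rw [hx, EuclideanSpace.norm_single, norm_one, mul_one] at h2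
  refine le_trans ?_ h2
  have : A.mulVec (Pi.single j 1) = fun i => A i j := by
    funext i
    simp [Matrix.mulVec_single]
  rw [this]
  have := EuclideanSpace.norm_eq ((WithLp.equiv 2 (Fin n → ℝ)).symm (fun i => A i j))
  rw [this]
  have habs : |A i j| = Real.sqrt (A i j ^ 2) := by
    rw [Real.sqrt_sq_eq_abs]
  rw [habs]
  apply Real.sqrt_le_sqrt
  have : A i j ^ 2 = ‖A i j‖ ^ 2 := by simp [Real.norm_eq_abs, sq_abs]
  rw [this]
  exact Finset.single_le_sum (f := fun t => ‖A t j‖ ^ 2) (fun t _ => sq_nonneg _)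
    (Finset.mem_univ i)

open scoped MatrixOrder in
lemma sq_card_le_trace_mul_trace_inv {n : ℕ} {M : Matrix (Fin n) (Fin n) ℝ}
    (hM : M.PosDef) : (n : ℝ) ^ 2 ≤ M.trace * M⁻¹.trace := by
  obtain ⟨S, hSsa, -, hSS⟩ := CFC.exists_sqrt_of_isSelfAdjoint_of_quasispectrumRestricts
    hM.posSemidef.isHermitian (QuasispectrumRestricts.nnreal_of_nonneg hM.posSemidef.nonneg)
  have hSsym : Sᵀ = S := by
    have h : S.IsHermitian := hSsa
    exact h
  have hdetS : IsUnit S.det := by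
    have hdM : M.det ≠ 0 := hM.det_pos.ne'
    rw [← hSS, Matrix.det_mul] at hdM
    have : S.det ≠ 0 := fun h => hdM (by rw [h, zero_mul])
    exact this.isUnit
  set T := S⁻¹ with hTdef
  have hST : S * T = 1 := Matrix.mul_nonsing_inv _ hdetS
  have hTsym : Tᵀ = T := by
    rw [hTdef, Matrix.transpose_nonsing_inv, hSsym]
  have hSe : ∀ i j, S j i = S i j := fun i j =>
    (congrFun (congrFun hSsym j) i).symm
  have hTe : ∀ i j, T j i = T i j := fun i j =>
    (congrFun (congrFun hTsym j) i).symm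
  have key := Finset.sum_mul_sq_le_sq_mul_sq (Finset.univ : Finset (Fin n × Fin n))
    (fun p => S p.1 p.2) (fun p => T p.1 p.2)
  have e1 : (∑ p : Fin n × Fin n, S p.1 p.2 * T p.1 p.2) = (n : ℝ) := by
    rw [Fintype.sum_prod_type]
    have h1 : ∀ i : Fin n, ∑ j : Fin n, S i j * T i j = (S * T) i i := by
      intro i
      rw [Matrix.mul_apply]
      exact Finset.sum_congr rfl fun j _ => by rw [hTe i j]
    simp_rw [h1]
    have h2 : ∑ i : Fin n, (S * T) i i = (S * T).trace := rfl
    rw [h2, hST, Matrix.trace_one]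
    simp
  have e2 : (∑ p : Fin n × Fin n, S p.1 p.2 ^ 2) = M.trace := by
    rw [Fintype.sum_prod_type, ← hSS, Matrix.trace]
    refine Finset.sum_congr rfl fun i _ => ?_
    rw [Matrix.diag_apply, Matrix.mul_apply]
    exact Finset.sum_congr rfl fun j _ => by rw [sq, hSe i j]
  have e3 : (∑ p : Fin n × Fin n, T p.1 p.2 ^ 2) = M⁻¹.trace := by
    have hTT : T * T = M⁻¹ := by rw [hTdef, ← Matrix.mul_inv_rev, hSS]
    rw [Fintype.sum_prod_type, ← hTT, Matrix.trace]
    refine Finset.sum_congr rfl fun i _ => ?_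
    rw [Matrix.diag_apply, Matrix.mul_apply]
    exact Finset.sum_congr rfl fun j _ => by rw [sq, hTe i j]
  rw [e1, e2, e3] at key
  exact key

/-- Fundamental lower bound on the minimum mean square error of the Kalman
filter estimate of `x₀` from `y₀, ..., y_k`:  with `Φ₀ = I`,
`Φ_{m+1} = A_m Φ_m`, sensor set `S` (so `Cᵀ C = ∑_{i ∈ S} eᵢ eᵢᵀ`),
observability Gramian `Õ_k = ∑_{m=0}^{k} Φ_mᵀ (∑_{i∈S} eᵢ eᵢᵀ) Φ_m`,
`μ = max ‖A_m‖₂ ≠ 1`, `σ₀⁻²` an upper bound on the diagonal of `Cov(x₀)⁻¹`,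
and `mmse(x₀) ≥ σ² tr[(Õ_k + σ² Cov(x₀)⁻¹)⁻¹]` (the zero-process-noise error),
we have `mmse(x₀) ≥ n σ² / (|S| (1 - μ^{2(k+1)})/(1 - μ²) + σ² σ₀⁻²)`. -/
theorem mmse_lower_bound
    {n : ℕ} (k : ℕ) (A : ℕ → Matrix (Fin n) (Fin n) ℝ)
    (Φ : ℕ → Matrix (Fin n) (Fin n) ℝ)
    (hΦ0 : Φ 0 = 1) (hΦ : ∀ m, Φ (m + 1) = A m * Φ m)
    (μ : ℝ) (hμ0 : 0 ≤ μ) (hμ1 : μ ≠ 1) (hA : ∀ m ≤ k, specNorm (A m) ≤ μ)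
    (σ : ℝ) (hσ : 0 < σ)
    (C₀ : Matrix (Fin n) (Fin n) ℝ) (hC₀ : C₀.PosDef)
    (σ0inv2 : ℝ) (hσ0 : ∀ i, C₀⁻¹ i i ≤ σ0inv2)
    (S : Finset (Fin n))
    (mmse : ℝ)
    (hmmse : σ ^ 2 *
        ((∑ m ∈ Finset.range (k + 1),
            (Φ m)ᵀ * (∑ i ∈ S, Matrix.single i i (1 : ℝ)) * Φ m)
          + σ ^ 2 • C₀⁻¹)⁻¹.trace ≤ mmse) :
    (n : ℝ) * σ ^ 2 /
        ((S.card : ℝ) * ((1 - μ ^ (2 * (k + 1))) / (1 - μ ^ 2))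
          + σ ^ 2 * σ0inv2)
      ≤ mmse := by
  rcases Nat.eq_zero_or_pos n with hn | hn
  · subst hn
    have ht : ((∑ m ∈ Finset.range (k + 1),
            (Φ m)ᵀ * (∑ i ∈ S, Matrix.single i i (1 : ℝ)) * Φ m)
          + σ ^ 2 • C₀⁻¹)⁻¹.trace = 0 := by
      simp [Matrix.trace]
    rw [ht, mul_zero] at hmmse
    simpa using hmmse
  haveI : Nonempty (Fin n) := ⟨⟨0, hn⟩⟩
  set E : Matrix (Fin n) (Fin n) ℝ := ∑ i ∈ S, Matrix.single i i (1 : ℝ) with hE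
  set O : Matrix (Fin n) (Fin n) ℝ := ∑ m ∈ Finset.range (k + 1), (Φ m)ᵀ * E * Φ m with hO
  set M : Matrix (Fin n) (Fin n) ℝ := O + σ ^ 2 • C₀⁻¹ with hMdef
  -- μ² ≠ 1
  have hμ2 : μ ^ 2 ≠ 1 := by
    intro h
    have h2 : (μ - 1) * (μ + 1) = 0 := by linear_combination h
    rcases mul_eq_zero.1 h2 with h3 | h3
    · exact hμ1 (by linarith)
    · linarith
  -- geometric sum
  have hr : (1 - μ ^ (2 * (k + 1))) / (1 - μ ^ 2)
      = ∑ m ∈ Finset.range (k + 1), (μ ^ 2) ^ m := by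
    rw [geom_sum_eq hμ2, pow_mul]
    have h1 : 1 - μ ^ 2 ≠ 0 := sub_ne_zero.mpr (Ne.symm hμ2)
    have h2 : μ ^ 2 - 1 ≠ 0 := sub_ne_zero.mpr hμ2
    field_simp
    ring
  set r : ℝ := (1 - μ ^ (2 * (k + 1))) / (1 - μ ^ 2) with hrdef
  have hr0 : 0 ≤ r := by
    rw [hr]
    exact Finset.sum_nonneg fun m _ => pow_nonneg (sq_nonneg μ) m
  -- E is a nonneg diagonal
  have hEdiag : E = Matrix.diagonal (fun j => if j ∈ S then (1 : ℝ) else 0) := by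
    ext a b
    simp only [hE, Matrix.sum_apply, Matrix.single, Matrix.of_apply,
      Matrix.diagonal_apply, ite_and]
    rw [Finset.sum_ite_eq' S a fun x => if x = b then (1 : ℝ) else 0]
    by_cases hab : a = b <;> by_cases ha : a ∈ S <;> simp [hab, ha]
  have hEpsd : E.PosSemidef := by
    rw [hEdiag]
    refine Matrix.PosSemidef.diagonal fun j => ?_
    by_cases h : j ∈ S <;> simp [h]
  -- O is PSD
  have hOpsd : O.PosSemidef := by
    rw [hO]
    refine Finset.sum_induction _ _ (fun a b ha hb => ha.add hb) Matrix.PosSemidef.zero ?_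
    intro m _
    have := hEpsd.conjTranspose_mul_mul_same (Φ m)
    simpa using this
  -- σ² • C₀⁻¹ is PD
  have hCinv : C₀⁻¹.PosDef := hC₀.inv
  have hsm : (σ ^ 2 • C₀⁻¹).PosDef := by
    refine Matrix.PosDef.of_dotProduct_mulVec_pos ?_ ?_
    · have h := hCinv.1
      unfold Matrix.IsHermitian at h ⊢
      rw [Matrix.conjTranspose_smul, h]
      norm_num
    · intro x hx
      rw [Matrix.smul_mulVec, dotProduct_smul]
      have := hCinv.dotProduct_mulVec_pos hx
      have hp : (0 : ℝ) < σ ^ 2 := pow_pos hσ 2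
      simpa [smul_eq_mul] using mul_pos hp this
  have hMpd : M.PosDef := Matrix.PosDef.posSemidef_add hOpsd hsm
  -- positive diagonal of PD matrices
  have hdiagpos : ∀ (P : Matrix (Fin n) (Fin n) ℝ), P.PosDef → ∀ i, 0 < P i i := by
    intro P hP i
    have hne : (Pi.single i 1 : Fin n → ℝ) ≠ 0 := by
      intro h
      have := congrFun h i
      simp at this
    have h := hP.dotProduct_mulVec_pos hne
    simpa [Matrix.mulVec_single, single_dotProduct] using h
  have hσ0pos : 0 < σ0inv2 := lt_of_lt_of_le (hdiagpos _ hCinv ⟨0, hn⟩) (hσ0 _)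
  -- spectral norm of Φ m
  have hspec : ∀ m, m ≤ k + 1 → specNorm (Φ m) ≤ μ ^ m := by
    intro m
    induction m with
    | zero => intro _; rw [hΦ0, pow_zero]; exact specNorm_one_le
    | succ m ih =>
      intro hm
      rw [hΦ m, pow_succ]
      calc specNorm (A m * Φ m) ≤ specNorm (A m) * specNorm (Φ m) := specNorm_mul_le _ _
        _ ≤ μ * μ ^ m :=
          mul_le_mul (hA m (by omega)) (ih (by omega)) (specNorm_nonneg _) hμ0
        _ = μ ^ m * μ := mul_comm _ _
  have hentry : ∀ m ≤ k, ∀ i j, (Φ m i j) ^ 2 ≤ (μ ^ 2) ^ m := by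
    intro m hm i j
    have h1 : |Φ m i j| ≤ μ ^ m :=
      le_trans (abs_entry_le_specNorm _ i j) (hspec m (by omega))
    calc (Φ m i j) ^ 2 = |Φ m i j| ^ 2 := (sq_abs _).symm
      _ ≤ (μ ^ m) ^ 2 := pow_le_pow_left₀ (abs_nonneg _) h1 2
      _ = (μ ^ 2) ^ m := by ring
  -- trace of each Gramian term
  have httr : ∀ m, ((Φ m)ᵀ * E * Φ m).trace = ∑ i ∈ S, ∑ j, (Φ m i j) ^ 2 := by
    intro m
    rw [hE, Finset.mul_sum, Finset.sum_mul, Matrix.trace_sum]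
    refine Finset.sum_congr rfl fun i _ => ?_
    rw [Matrix.trace]
    refine Finset.sum_congr rfl fun j _ => ?_
    rw [Matrix.diag_apply, Matrix.mul_apply]
    simp [Matrix.mul_apply, Matrix.single, ite_and, mul_ite, ite_mul,
      Finset.sum_ite_eq, Finset.sum_ite_eq', sq]
  -- trace bound on O
  have htrO : O.trace ≤ (n : ℝ) * ((S.card : ℝ) * r) := by
    rw [hO, Matrix.trace_sum]
    calc ∑ m ∈ Finset.range (k + 1), ((Φ m)ᵀ * E * Φ m).trace
        ≤ ∑ m ∈ Finset.range (k + 1), (S.card : ℝ) * (n : ℝ) * (μ ^ 2) ^ m := by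
          refine Finset.sum_le_sum fun m hm => ?_
          rw [httr m]
          have hmk : m ≤ k := by
            have := Finset.mem_range.mp hm; omega
          calc ∑ i ∈ S, ∑ j, (Φ m i j) ^ 2
              ≤ ∑ i ∈ S, ∑ _j : Fin n, (μ ^ 2) ^ m :=
                Finset.sum_le_sum fun i _ =>
                  Finset.sum_le_sum fun j _ => hentry m hmk i j
            _ = (S.card : ℝ) * (n : ℝ) * (μ ^ 2) ^ m := by
                simp [Finset.sum_const, Finset.card_univ, mul_assoc]
      _ = (n : ℝ) * ((S.card : ℝ) * r) := by
          rw [← Finset.mul_sum, hr]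
          ring
  -- trace bound on the covariance term
  have htrC : C₀⁻¹.trace ≤ (n : ℝ) * σ0inv2 := by
    rw [Matrix.trace]
    calc ∑ i, C₀⁻¹.diag i ≤ ∑ _i : Fin n, σ0inv2 :=
          Finset.sum_le_sum fun i _ => hσ0 i
      _ = (n : ℝ) * σ0inv2 := by simp [Finset.sum_const, Finset.card_univ]
  set D : ℝ := (S.card : ℝ) * r + σ ^ 2 * σ0inv2 with hD
  have hDpos : 0 < D := by
    have h1 : (0 : ℝ) ≤ (S.card : ℝ) * r := mul_nonneg (Nat.cast_nonneg _) hr0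
    have h2 : (0 : ℝ) < σ ^ 2 * σ0inv2 := mul_pos (pow_pos hσ 2) hσ0pos
    rw [hD]; linarith
  have htrM_le : M.trace ≤ (n : ℝ) * D := by
    rw [hMdef, Matrix.trace_add, Matrix.trace_smul]
    have h2 : σ ^ 2 • C₀⁻¹.trace ≤ σ ^ 2 * ((n : ℝ) * σ0inv2) := by
      rw [smul_eq_mul]
      exact mul_le_mul_of_nonneg_left htrC (sq_nonneg σ)
    rw [hD]
    have := add_le_add htrO h2
    calc O.trace + σ ^ 2 • C₀⁻¹.trace ≤ (n : ℝ) * ((S.card : ℝ) * r) + σ ^ 2 * ((n : ℝ) * σ0inv2) := this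
      _ = (n : ℝ) * ((S.card : ℝ) * r + σ ^ 2 * σ0inv2) := by ring
  have htrM_pos : 0 < M.trace := by
    rw [Matrix.trace]
    exact Finset.sum_pos (fun i _ => hdiagpos _ hMpd i) Finset.univ_nonempty
  -- harmonic-arithmetic mean
  have key : (n : ℝ) ^ 2 ≤ M.trace * M⁻¹.trace := sq_card_le_trace_mul_trace_inv hMpd
  have h5 : (n : ℝ) ^ 2 / M.trace ≤ M⁻¹.trace := by
    rw [div_le_iff₀ htrM_pos]
    linarith [key]
  have hnpos : (0 : ℝ) < (n : ℝ) := by exact_mod_cast hn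
  have h6 : (n : ℝ) * σ ^ 2 / D = σ ^ 2 * ((n : ℝ) ^ 2 / ((n : ℝ) * D)) := by
    field_simp
  have h7 : (n : ℝ) ^ 2 / ((n : ℝ) * D) ≤ (n : ℝ) ^ 2 / M.trace :=
    div_le_div_of_nonneg_left (by positivity) htrM_pos htrM_le
  calc (n : ℝ) * σ ^ 2 / D = σ ^ 2 * ((n : ℝ) ^ 2 / ((n : ℝ) * D)) := h6
    _ ≤ σ ^ 2 * ((n : ℝ) ^ 2 / M.trace) :=
        mul_le_mul_of_nonneg_left h7 (sq_nonneg σ)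
    _ ≤ σ ^ 2 * M⁻¹.trace := mul_le_mul_of_nonneg_left h5 (sq_nonneg σ)
    _ ≤ mmse := hmmse
end
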